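/- Let β > 0, γ > 0 with γ ≥ β, and let y : [0,∞) → ℝ be differentiable with y'(t) = ((1−y(t))β − γ)·y(t) for all t ≥ 0 and y(0) ∈ (0,1]. Then y(t) ∈ (0,1] for all t ≥ 0, y is nonincreasing, and y(t) → 0 as t → ∞. -/

import Mathlib

open Set Filter Real

/-- Slope condition needed for the Grönwall lemma, from a genuine derivative. -/
lemma sis_slope_aux {f : ℝ → ℝ} {f' : ℝ} {x : ℝ} (h : HasDerivAt f f' x) :
    ∀ r, f' < r → ∃ᶠ z in nhdsWithin x (Set.Ioi x), (z - x)⁻¹ * (f z - f x) < r := by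
  intro r hr
  have := h.hasDerivWithinAt (s := Set.Ici x) |>.liminf_right_slope_le hr
  refine this.mono fun z hz => ?_
  simpa [slope_def_field, div_eq_inv_mul] using hz

/-- Upper bound: the solution stays ≤ 1. -/
lemma sis_upper (β γ : ℝ) (hβ : β > 0) (hγ : γ > 0) (hγβ : γ ≥ β)
    (y : ℝ → ℝ)
    (hy : ∀ t ≥ (0:ℝ), HasDerivAt y (((1 - y t) * β - γ) * y t) t)
    (hy0 : y 0 ∈ Set.Ioc (0:ℝ) 1) :
    ∀ t ≥ (0:ℝ), y t ≤ 1 := by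
  intro t ht
  have key := le_gronwallBound_of_liminf_deriv_right_le
    (f := fun s => y s - 1) (f' := fun s => ((1 - y s) * β - γ) * y s)
    (δ := 0) (K := -(β + γ)) (ε := 0) (a := 0) (b := t)
    (fun s hs => ((hy s hs.1).sub_const 1).continuousAt.continuousWithinAt)
    (fun x hx => sis_slope_aux ((hy x hx.1).sub_const 1))
    (by simpa using hy0.2)
    (fun x hx => by nlinarith [sq_nonneg (y x - 1)])
  have := key t ⟨ht, le_refl t⟩
  rw [gronwallBound_ε0_δ0] at this
  linarith

/-- Positivity: the solution stays > 0. -/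
lemma sis_pos (β γ : ℝ) (hβ : β > 0) (hγ : γ > 0) (hγβ : γ ≥ β)
    (y : ℝ → ℝ)
    (hy : ∀ t ≥ (0:ℝ), HasDerivAt y (((1 - y t) * β - γ) * y t) t)
    (hy0 : y 0 ∈ Set.Ioc (0:ℝ) 1) :
    ∀ t ≥ (0:ℝ), 0 < y t := by
  have hup := sis_upper β γ hβ hγ hγβ y hy hy0
  by_contra h
  push_neg at h
  obtain ⟨T, hT, hyT⟩ := h
  have hcont : ∀ a b : ℝ, 0 ≤ a → ContinuousOn y (Set.Icc a b) :=
    fun a b ha => fun s hs => (hy s (ha.trans hs.1)).continuousAt.continuousWithinAt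
  -- find a zero of y on [0, T]
  have h0 : (0:ℝ) ∈ Set.Icc (y T) (y 0) := ⟨hyT, hy0.1.le⟩
  have hT0 : (0:ℝ) ≤ T := hT
  obtain ⟨s, hs, hys⟩ := intermediate_value_Icc' hT0 (hcont 0 T le_rfl) h0
  -- the set of zeros in [0, T]
  set Z : Set ℝ := {u : ℝ | u ∈ Set.Icc (0:ℝ) T ∧ y u = 0} with hZ
  have hZne : Z.Nonempty := ⟨s, hs, hys⟩
  have hZclosed : IsClosed Z := by
    have : Z = Set.Icc (0:ℝ) T ∩ y ⁻¹' {0} := by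
      ext u; simp [hZ, Set.mem_setOf_eq, Set.mem_inter_iff]
    rw [this]
    exact (hcont 0 T le_rfl).preimage_isClosed_of_isClosed isClosed_Icc isClosed_singleton
  have hZbdd : BddBelow Z := ⟨0, fun u hu => hu.1.1⟩
  set t₁ := sInf Z with ht₁
  have ht₁mem : t₁ ∈ Z := hZclosed.csInf_mem hZne hZbdd
  have ht₁0 : 0 ≤ t₁ := ht₁mem.1.1
  have hyt₁ : y t₁ = 0 := ht₁mem.2
  -- y > 0 on [0, t₁)
  have hpos : ∀ u ∈ Set.Ico (0:ℝ) t₁, 0 < y u := by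
    intro u hu
    by_contra hneg
    push_neg at hneg
    have h0' : (0:ℝ) ∈ Set.Icc (y u) (y 0) := ⟨hneg, hy0.1.le⟩
    obtain ⟨v, hv, hyv⟩ := intermediate_value_Icc' hu.1 (hcont 0 u le_rfl) h0'
    have hvZ : v ∈ Z := ⟨⟨hv.1, hv.2.trans (hu.2.le.trans ht₁mem.1.2)⟩, hyv⟩
    have : t₁ ≤ v := csInf_le hZbdd hvZ
    linarith [hv.2, hu.2]
  -- Grönwall lower bound on [0, t₁]
  have key := le_gronwallBound_of_liminf_deriv_right_le
    (f := fun s => -(y s)) (f' := fun s => -(((1 - y s) * β - γ) * y s))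
    (δ := -(y 0)) (K := -γ) (ε := 0) (a := 0) (b := t₁)
    (fun s hs => ((hy s hs.1).neg).continuousAt.continuousWithinAt)
    (fun x hx => sis_slope_aux ((hy x hx.1).neg))
    le_rfl
    (fun x hx => by
      have h1 : y x ≤ 1 := hup x hx.1
      have h2 : 0 < y x := hpos x hx
      nlinarith [mul_nonneg (sub_nonneg.2 h1) h2.le])
  have hfin := key t₁ ⟨ht₁0, le_refl t₁⟩
  rw [gronwallBound_ε0] at hfin
  have : -(y 0) * Real.exp (-γ * (t₁ - 0)) < 0 := by
    have := Real.exp_pos (-γ * (t₁ - 0))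
    nlinarith [hy0.1]
  rw [hyt₁] at hfin
  linarith

/-- For the scalar SIS dynamics ẏ = ((1−y)β − γ)y with γ ≥ β > 0 and
y(0) ∈ (0,1], the infected proportion stays in (0,1], is nonincreasing, and
converges to 0. -/
theorem sis_disease_free_convergence
    (β γ : ℝ) (hβ : β > 0) (hγ : γ > 0) (hγβ : γ ≥ β)
    (y : ℝ → ℝ)
    (hy : ∀ t ≥ (0:ℝ), HasDerivAt y (((1 - y t) * β - γ) * y t) t)
    (hy0 : y 0 ∈ Set.Ioc (0:ℝ) 1) :
    (∀ t ≥ (0:ℝ), y t ∈ Set.Ioc (0:ℝ) 1) ∧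
    AntitoneOn y (Set.Ici 0) ∧
    Filter.Tendsto y Filter.atTop (nhds 0) := by
  have hup := sis_upper β γ hβ hγ hγβ y hy hy0
  have hpos := sis_pos β γ hβ hγ hγβ y hy hy0
  have hmem : ∀ t ≥ (0:ℝ), y t ∈ Set.Ioc (0:ℝ) 1 := fun t ht => ⟨hpos t ht, hup t ht⟩
  have hanti : AntitoneOn y (Set.Ici 0) := by
    apply antitoneOn_of_deriv_nonpos (convex_Ici 0)
      (fun t ht => (hy t ht).continuousAt.continuousWithinAt)
    · intro x hx
      rw [interior_Ici] at hx
      exact (hy x (le_of_lt hx)).differentiableAt.differentiableWithinAt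
    · intro x hx
      rw [interior_Ici] at hx
      rw [(hy x (le_of_lt hx)).deriv]
      have h1 := hup x hx.le
      have h2 := hpos x hx.le
      have h3 : (1 - y x) * β - γ ≤ 0 := by nlinarith
      exact mul_nonpos_of_nonpos_of_nonneg h3 h2.le
  refine ⟨hmem, hanti, ?_⟩
  -- convergence to 0
  have hsmall : ∀ ε > (0:ℝ), ∃ t₀ ≥ (0:ℝ), y t₀ < ε := by
    intro ε hε
    by_contra h
    push_neg at h
    -- then y t ≥ ε for all t ≥ 0, and y decreases at rate ≥ β ε²
    set g : ℝ → ℝ := fun t => y t + β * ε ^ 2 * t with hg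
    have hganti : AntitoneOn g (Set.Ici 0) := by
      apply antitoneOn_of_deriv_nonpos (convex_Ici 0)
      · exact fun t ht => (((hy t ht).add
          ((hasDerivAt_id t).const_mul (β * ε ^ 2))).continuousAt).continuousWithinAt
      · intro x hx
        rw [interior_Ici] at hx
        exact ((hy x hx.le).add
          ((hasDerivAt_id x).const_mul (β * ε ^ 2))).differentiableAt.differentiableWithinAt
      · intro x hx
        rw [interior_Ici] at hx
        have hd : HasDerivAt g (((1 - y x) * β - γ) * y x + β * ε ^ 2 * 1) x :=
          (hy x hx.le).add ((hasDerivAt_id x).const_mul (β * ε ^ 2))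
        rw [hd.deriv]
        have h1 := hup x hx.le
        have h2 := h x hx.le
        have hyx : ε ≤ y x := h x hx.le
        have hsq : β * ε ^ 2 ≤ β * y x ^ 2 :=
          mul_le_mul_of_nonneg_left (pow_le_pow_left₀ hε.le hyx 2) hβ.le
        nlinarith [hsq, mul_nonneg (sub_nonneg.2 hγβ) (hε.le.trans hyx)]
    set T : ℝ := y 0 / (β * ε ^ 2) + 1 with hT
    have hβε : 0 < β * ε ^ 2 := by positivity
    have hT0 : (0:ℝ) ≤ T := by
      have : 0 ≤ y 0 / (β * ε ^ 2) := div_nonneg hy0.1.le hβε.le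
      rw [hT]; linarith
    have := hganti Set.self_mem_Ici (show T ∈ Set.Ici (0:ℝ) from hT0) hT0
    simp only [hg, mul_zero, add_zero] at this
    have hyT : ε ≤ y T := h T hT0
    have hTval : β * ε ^ 2 * T = y 0 + β * ε ^ 2 := by
      rw [hT]
      field_simp
    nlinarith
  rw [Metric.tendsto_atTop]
  intro ε hε
  obtain ⟨t₀, ht₀, hyt₀⟩ := hsmall ε hε
  refine ⟨t₀, fun t ht => ?_⟩
  have h1 : y t ≤ y t₀ := hanti ht₀ (ht₀.trans ht) ht
  have h2 : 0 < y t := hpos t (ht₀.trans ht)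
  rw [Real.dist_eq]
  rw [abs_of_pos (by linarith)]
  linarith
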